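/- Let (V, r, parent) be an arborescence with edge weights c, w : V → ℝ such that c v > 0 and w v > 0 for all v ≠ r, satisfying both the combined triangle inequality and the combined 2-optimality condition. Let m be the number of non-root vertices (the number of edges) and suppose c(A) ≥ 18 · w(A), where c(A) = Σ_{v ≠ r} c(v) and w(A) = Σ_{v ≠ r} w(v). Then c(A) ≤ 12 · (Real.log m / Real.log (Real.log m)) · w(A). -/

import Mathlib

/-- `(r, parent)` is an arborescence on `V`: the root is a fixed point of
`parent`, and every vertex reaches the root by iterating `parent`. -/
def IsArborescence {V : Type} (r : V) (parent : V → V) : Prop :=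
  parent r = r ∧ ∀ v : V, ∃ n : ℕ, parent^[n] v = r

open Classical in
/-- The children of a vertex `y`. -/
noncomputable def children {V : Type} [Fintype V] (parent : V → V) (y : V) : Finset V :=
  Finset.univ.filter fun u => parent u = y ∧ u ≠ y

open Classical in
/-- The descendants of a vertex `v` (including `v` itself): the vertex set of the
sub-arborescence below the edge entering `v`. -/
noncomputable def desc {V : Type} [Fintype V] (parent : V → V) (v : V) : Finset V :=
  Finset.univ.filter fun u => ∃ n : ℕ, parent^[n] u = v

open Classical in
/-- The non-root vertices, corresponding to the edges of the arborescence. -/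
noncomputable def nonRoot {V : Type} [Fintype V] (r : V) : Finset V :=
  Finset.univ.filter fun v => v ≠ r

/-- The combined triangle inequality. -/
def CombinedTriangle {V : Type} [Fintype V] (r : V) (parent : V → V) (c w : V → ℝ) : Prop :=
  ∀ v : V, v ≠ r → c v ≤ w v + ∑ u ∈ children parent v, c u

open Classical in
/-- The combined 2-optimality condition. -/
noncomputable def CombinedTwoOpt {V : Type} [Fintype V] (r : V) (parent : V → V) (c w : V → ℝ) : Prop :=
  ∀ v : V, v ≠ r → ∀ z ∈ children parent v,
    c v + c z ≤ w v + ∑ u ∈ (children parent v).erase z, c u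

section Aux
variable {V : Type} [Fintype V] {r : V} {parent : V → V}
attribute [local instance] Classical.propDecidable
set_option linter.unusedSectionVars false

lemma mem_desc' {u v : V} : u ∈ desc parent v ↔ ∃ n : ℕ, parent^[n] u = v := by
  simp [desc]

lemma mem_children' {z v : V} : z ∈ children parent v ↔ parent z = v ∧ z ≠ v := by
  simp [children]

lemma mem_nonRoot' {u : V} : u ∈ nonRoot r ↔ u ≠ r := by
  simp [nonRoot]

lemma self_mem_desc' (v : V) : v ∈ desc parent v := mem_desc'.2 ⟨0, rfl⟩

lemma iterate_root' (harb : IsArborescence r parent) (n : ℕ) : parent^[n] r = r := by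
  induction n with
  | zero => rfl
  | succ n ih => rw [Function.iterate_succ_apply', ih, harb.1]

lemma eq_root_of_cycle' (harb : IsArborescence r parent) {v : V} {k : ℕ} (hk : 0 < k)
    (h : parent^[k] v = v) : v = r := by
  obtain ⟨n, hn⟩ := harb.2 v
  have hmul : ∀ t : ℕ, parent^[k * t] v = v := by
    intro t
    induction t with
    | zero => simp
    | succ t ih =>
      rw [Nat.mul_succ, Function.iterate_add_apply, h, ih]
  have e : k * n - n + n = k * n := by
    have : n ≤ k * n := Nat.le_mul_of_pos_left n hk
    omega
  calc v = parent^[k * n] v := (hmul n).symm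
    _ = parent^[k * n - n] (parent^[n] v) := by rw [← Function.iterate_add_apply, e]
    _ = r := by rw [hn, iterate_root' harb]

lemma child_ne_root (harb : IsArborescence r parent) {z v : V} (hv : v ≠ r)
    (hz : z ∈ children parent v) : z ≠ r := by
  rintro rfl
  obtain ⟨h1, h2⟩ := mem_children'.1 hz
  rw [harb.1] at h1
  exact hv h1.symm

lemma not_mem_desc_of_child (harb : IsArborescence r parent) {v z : V}
    (hz : z ∈ children parent v) : v ∉ desc parent z := by
  rintro hmem
  obtain ⟨k, hk⟩ := mem_desc'.1 hmem
  obtain ⟨h1, h2⟩ := mem_children'.1 hz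
  have hcyc : parent^[k + 1] v = v := by
    rw [Function.iterate_succ_apply', hk, h1]
  have hvr : v = r := eq_root_of_cycle' harb (Nat.succ_pos k) hcyc
  apply h2
  rw [hvr] at hk ⊢
  rw [iterate_root' harb] at hk
  exact hk ▸ rfl

lemma desc_child_subset {v z : V} (hz : z ∈ children parent v) :
    desc parent z ⊆ desc parent v := by
  intro u hu
  obtain ⟨n, hn⟩ := mem_desc'.1 hu
  exact mem_desc'.2 ⟨n + 1, by rw [Function.iterate_succ_apply', hn, (mem_children'.1 hz).1]⟩

lemma children_eq_of_le (harb : IsArborescence r parent) {v z₁ z₂ u : V} {a b : ℕ}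
    (hz₁ : z₁ ∈ children parent v) (hz₂ : z₂ ∈ children parent v)
    (ha : parent^[a] u = z₁) (hb : parent^[b] u = z₂) (hab : a ≤ b) : z₁ = z₂ := by
  obtain ⟨p1, n1⟩ := mem_children'.1 hz₁
  obtain ⟨p2, n2⟩ := mem_children'.1 hz₂
  have hba : parent^[b - a] z₁ = z₂ := by
    rw [← ha, ← Function.iterate_add_apply]
    rw [Nat.sub_add_cancel hab, hb]
  rcases Nat.eq_zero_or_pos (b - a) with h0 | hpos
  · rw [h0] at hba; exact hba
  · exfalso
    obtain ⟨j, hj⟩ : ∃ j, b - a = j + 1 := ⟨b - a - 1, by omega⟩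
    rw [hj, Function.iterate_succ_apply, p1] at hba
    -- hba : parent^[j] v = z₂
    have hcyc : parent^[j + 1] v = v := by
      rw [Function.iterate_succ_apply', hba, p2]
    have hvr : v = r := eq_root_of_cycle' harb (Nat.succ_pos j) hcyc
    apply n2
    rw [hvr] at hba ⊢
    rw [iterate_root' harb] at hba
    exact hba.symm

lemma pairwiseDisjoint_desc (harb : IsArborescence r parent) (v : V) :
    (↑(children parent v) : Set V).PairwiseDisjoint (desc parent) := by
  intro z₁ h₁ z₂ h₂ hne
  simp only [Function.onFun]
  rw [Finset.disjoint_left]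
  intro u hu₁ hu₂
  obtain ⟨a, ha⟩ := mem_desc'.1 hu₁
  obtain ⟨b, hb⟩ := mem_desc'.1 hu₂
  apply hne
  rcases Nat.le_total a b with hab | hab
  · exact children_eq_of_le harb (Finset.mem_coe.1 h₁) (Finset.mem_coe.1 h₂) ha hb hab
  · exact (children_eq_of_le harb (Finset.mem_coe.1 h₂) (Finset.mem_coe.1 h₁) hb ha hab).symm

lemma desc_eq (harb : IsArborescence r parent) (v : V) :
    desc parent v = insert v ((children parent v).biUnion (desc parent)) := by
  ext u
  simp only [Finset.mem_insert, Finset.mem_biUnion]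
  constructor
  · intro hu
    obtain ⟨n, hn⟩ := mem_desc'.1 hu
    by_cases huv : u = v
    · exact Or.inl huv
    · right
      have hex : ∃ n, parent^[n] u = v := ⟨n, hn⟩
      classical
      have hspec := Nat.find_spec hex
      set n₀ := Nat.find hex with hn₀
      have hne0 : n₀ ≠ 0 := by
        intro h0
        rw [h0] at hspec
        exact huv hspec
      obtain ⟨m, hm⟩ : ∃ m, n₀ = m + 1 := ⟨n₀ - 1, by omega⟩
      refine ⟨parent^[m] u, mem_children'.2 ⟨?_, ?_⟩, mem_desc'.2 ⟨m, rfl⟩⟩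
      · rw [← Function.iterate_succ_apply' parent m u]
        rw [hm] at hspec; exact hspec
      · intro heq
        have := Nat.find_min hex (by omega : m < n₀) heq
        exact this
  · rintro (rfl | ⟨z, hz, hu⟩)
    · exact self_mem_desc' u
    · exact desc_child_subset hz hu

lemma not_mem_biUnion (harb : IsArborescence r parent) (v : V) :
    v ∉ (children parent v).biUnion (desc parent) := by
  intro h
  obtain ⟨z, hz, hmem⟩ := Finset.mem_biUnion.1 h
  exact not_mem_desc_of_child harb hz hmem

lemma sum_desc (harb : IsArborescence r parent) (v : V) (f : V → ℝ) :
    ∑ u ∈ desc parent v, f u = f v + ∑ z ∈ children parent v, ∑ u ∈ desc parent z, f u := by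
  rw [desc_eq harb v, Finset.sum_insert (not_mem_biUnion harb v),
    Finset.sum_biUnion (pairwiseDisjoint_desc harb v)]

lemma card_desc (harb : IsArborescence r parent) (v : V) :
    ((desc parent v).card : ℝ) = 1 + ∑ z ∈ children parent v, ((desc parent z).card : ℝ) := by
  have h := sum_desc harb v (fun _ => (1 : ℝ))
  simpa using h

lemma card_desc_lt (harb : IsArborescence r parent) {v z : V} (hz : z ∈ children parent v) :
    (desc parent z).card < (desc parent v).card := by
  apply Finset.card_lt_card
  rw [Finset.ssubset_iff_subset_ne]
  refine ⟨desc_child_subset hz, fun h => ?_⟩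
  exact not_mem_desc_of_child harb hz (h ▸ self_mem_desc' v)

lemma root_not_mem_desc (harb : IsArborescence r parent) {z : V} (hz : z ≠ r) :
    r ∉ desc parent z := by
  intro h
  obtain ⟨n, hn⟩ := mem_desc'.1 h
  rw [iterate_root' harb] at hn
  exact hz hn.symm

lemma ne_root_of_mem_desc (harb : IsArborescence r parent) {z u : V} (hz : z ≠ r)
    (hu : u ∈ desc parent z) : u ≠ r := by
  rintro rfl
  exact root_not_mem_desc harb hz hu

lemma nonRoot_eq (harb : IsArborescence r parent) :
    nonRoot r = (children parent r).biUnion (desc parent) := by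
  ext u
  rw [mem_nonRoot']
  constructor
  · intro hu
    have hmem : u ∈ desc parent r := mem_desc'.2 (harb.2 u)
    rw [desc_eq harb r, Finset.mem_insert] at hmem
    rcases hmem with h | h
    · exact absurd h hu
    · exact h
  · intro h
    obtain ⟨z, hz, hmem⟩ := Finset.mem_biUnion.1 h
    exact ne_root_of_mem_desc harb (mem_children'.1 hz).2 hmem

lemma sum_nonRoot (harb : IsArborescence r parent) (f : V → ℝ) :
    ∑ u ∈ nonRoot r, f u = ∑ z ∈ children parent r, ∑ u ∈ desc parent z, f u := by
  rw [nonRoot_eq harb, Finset.sum_biUnion (pairwiseDisjoint_desc harb r)]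

lemma desc_subset_nonRoot (harb : IsArborescence r parent) {z : V} (hz : z ≠ r) :
    desc parent z ⊆ nonRoot r := fun u hu =>
  mem_nonRoot'.2 (ne_root_of_mem_desc harb hz hu)

end Aux

section Main
variable {V : Type} [Fintype V] {r : V} {parent : V → V} {c w : V → ℝ}
attribute [local instance] Classical.propDecidable
set_option linter.unusedSectionVars false

lemma lemA (harb : IsArborescence r parent)
    (htri : CombinedTriangle r parent c w) :
    ∀ (n : ℕ) (v : V), v ≠ r → (desc parent v).card ≤ n →
      c v ≤ ∑ u ∈ desc parent v, w u := by
  intro n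
  induction n with
  | zero =>
    intro v hv hcard
    exact absurd hcard (by simp [Finset.card_pos.2 ⟨v, self_mem_desc' v⟩, Nat.pos_iff_ne_zero.1])
  | succ n ih =>
    intro v hv hcard
    have h1 := htri v hv
    have h2 : ∀ z ∈ children parent v, c z ≤ ∑ u ∈ desc parent z, w u := by
      intro z hz
      refine ih z (child_ne_root harb hv hz) ?_
      have := card_desc_lt harb hz
      omega
    calc c v ≤ w v + ∑ z ∈ children parent v, c z := h1
      _ ≤ w v + ∑ z ∈ children parent v, ∑ u ∈ desc parent z, w u := by
          gcongr with z hz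
          exact h2 z hz
      _ = ∑ u ∈ desc parent v, w u := (sum_desc harb v w).symm

end Main

section Main2
variable {V : Type} [Fintype V] {r : V} {parent : V → V} {c w : V → ℝ}
attribute [local instance] Classical.propDecidable
set_option linter.unusedSectionVars false
set_option maxHeartbeats 1000000

lemma mainQ (harb : IsArborescence r parent)
    (hc : ∀ v : V, v ≠ r → 0 < c v) (hw : ∀ v : V, v ≠ r → 0 < w v)
    (htri : CombinedTriangle r parent c w)
    (h2opt : CombinedTwoOpt r parent c w)
    (K : ℝ) (hK : 1 < K) :
    ∀ (n : ℕ) (v : V), v ≠ r → (desc parent v).card ≤ n →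
      (∑ u ∈ desc parent v, c u) + K * c v ≤
        (2 * K + Real.log ((desc parent v).card : ℝ) / Real.log K) *
          ∑ u ∈ desc parent v, w u := by
  have hK0 : (0 : ℝ) < K := by linarith
  have hlogK : 0 < Real.log K := Real.log_pos hK
  intro n
  induction n with
  | zero =>
    intro v hv hcard
    exact absurd hcard (by simp [Finset.card_pos.2 ⟨v, self_mem_desc' v⟩, Nat.pos_iff_ne_zero.1])
  | succ n ih =>
    intro v hv hcard
    -- notation
    set Nv : ℝ := ((desc parent v).card : ℝ) with hNv
    have hNv1 : (1 : ℝ) ≤ Nv := by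
      rw [hNv]
      exact_mod_cast Finset.card_pos.2 ⟨v, self_mem_desc' v⟩
    have hlogNv : 0 ≤ Real.log Nv := Real.log_nonneg hNv1
    set Hv : ℝ := 2 * K + Real.log Nv / Real.log K with hHv
    have hHv2K : 2 * K ≤ Hv := by
      rw [hHv]
      have : 0 ≤ Real.log Nv / Real.log K := div_nonneg hlogNv hlogK.le
      linarith
    have hHv1K : 1 + K ≤ Hv := by linarith
    have hwv : 0 < w v := hw v hv
    rcases Finset.eq_empty_or_nonempty (children parent v) with hch | hch
    · -- leaf
      have h1 : c v ≤ w v := by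
        have := htri v hv
        rw [hch] at this
        simpa using this
      have hsc := sum_desc harb v c
      have hsw := sum_desc harb v w
      rw [hch] at hsc hsw
      simp at hsc hsw
      rw [hsc, hsw]
      have h2 : c v + K * c v ≤ w v + K * w v := by nlinarith
      have h3 : (1 + K) * w v ≤ Hv * w v := by
        apply mul_le_mul_of_nonneg_right hHv1K hwv.le
      nlinarith
    · -- internal vertex
      obtain ⟨zm, hzm, hzmax⟩ := Finset.exists_max_image (children parent v) c hch
      set M : ℝ := c zm with hM
      have hM0 : 0 < M := hc zm (child_ne_root harb hv hzm)
      set S : ℝ := ∑ z ∈ children parent v, c z with hS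
      -- two-opt
      have h2o : c v ≤ w v + S - 2 * M := by
        have h := h2opt v hv zm hzm
        have herase : ∑ u ∈ (children parent v).erase zm, c u + c zm = S :=
          Finset.sum_erase_add _ _ hzm
        linarith
      -- facts about children
      have hchne : ∀ z ∈ children parent v, z ≠ r := fun z hz => child_ne_root harb hv hz
      have hcardz : ∀ z ∈ children parent v, (desc parent z).card ≤ n := by
        intro z hz
        have := card_desc_lt harb hz
        omega
      have hNz1 : ∀ z ∈ children parent v, (1 : ℝ) ≤ ((desc parent z).card : ℝ) := by
        intro z hz
        have : 0 < (desc parent z).card := Finset.card_pos.2 ⟨z, self_mem_desc' z⟩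
        exact_mod_cast this
      have hNzNv : ∀ z ∈ children parent v, ((desc parent z).card : ℝ) ≤ Nv := by
        intro z hz
        rw [hNv]
        exact_mod_cast Finset.card_le_card (desc_child_subset hz)
      have hWz0 : ∀ z ∈ children parent v, 0 ≤ ∑ u ∈ desc parent z, w u := by
        intro z hz
        exact Finset.sum_nonneg fun u hu =>
          (hw u (ne_root_of_mem_desc harb (hchne z hz) hu)).le
      -- abbreviations for sums
      set A : ℝ := ∑ z ∈ children parent v, ∑ u ∈ desc parent z, c u with hA
      set B : ℝ := ∑ z ∈ children parent v,
        ((2 * K + Real.log ((desc parent z).card : ℝ) / Real.log K) *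
          ∑ u ∈ desc parent z, w u) with hB
      set A1 : ℝ := ∑ z ∈ children parent v,
        ((Hv - (2 * K + Real.log ((desc parent z).card : ℝ) / Real.log K)) *
          ∑ u ∈ desc parent z, w u) with hA1
      set WS : ℝ := ∑ z ∈ children parent v, ∑ u ∈ desc parent z, w u with hWS
      -- step1 : A + K * S ≤ B
      have step1 : A + K * S ≤ B := by
        have h : ∀ z ∈ children parent v,
            (∑ u ∈ desc parent z, c u) + K * c z ≤
              (2 * K + Real.log ((desc parent z).card : ℝ) / Real.log K) *
                ∑ u ∈ desc parent z, w u := by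
          intro z hz
          exact ih z (hchne z hz) (hcardz z hz)
        have h2 := Finset.sum_le_sum h
        rw [Finset.sum_add_distrib, ← Finset.mul_sum] at h2
        exact h2
      -- A1 = Hv * WS - B
      have hA1eq : A1 = Hv * WS - B := by
        rw [hA1, hB, hWS, Finset.mul_sum, ← Finset.sum_sub_distrib]
        exact Finset.sum_congr rfl fun z hz => by ring
      -- step2 : S ≤ K * M + A1
      have step2 : S ≤ K * M + A1 := by
        set p : V → Prop := fun z => Nv < K * ((desc parent z).card : ℝ) with hp
        have hsplit : S = (∑ z ∈ (children parent v).filter p, c z) +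
            ∑ z ∈ (children parent v).filter (fun z => ¬ p z), c z :=
          (Finset.sum_filter_add_sum_filter_not _ _ _).symm
        -- bad part
        have hbad1 : (∑ z ∈ (children parent v).filter p, c z) ≤
            (((children parent v).filter p).card : ℝ) * M := by
          calc (∑ z ∈ (children parent v).filter p, c z)
              ≤ ∑ _z ∈ (children parent v).filter p, M := by
                apply Finset.sum_le_sum
                intro z hz
                exact hzmax z (Finset.mem_of_mem_filter z hz)
            _ = (((children parent v).filter p).card : ℝ) * M := by
                rw [Finset.sum_const, nsmul_eq_mul]
        have hbadcard : (((children parent v).filter p).card : ℝ) ≤ K := by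
          have hNsum : Nv = 1 + ∑ z ∈ children parent v, ((desc parent z).card : ℝ) := by
            rw [hNv]; exact card_desc harb v
          have h1 : (((children parent v).filter p).card : ℝ) * Nv ≤
              K * ∑ z ∈ (children parent v).filter p, ((desc parent z).card : ℝ) := by
            calc (((children parent v).filter p).card : ℝ) * Nv
                = ∑ _z ∈ (children parent v).filter p, Nv := by
                  rw [Finset.sum_const, nsmul_eq_mul]
              _ ≤ ∑ z ∈ (children parent v).filter p, K * ((desc parent z).card : ℝ) := by
                  apply Finset.sum_le_sum
                  intro z hz
                  exact (le_of_lt (Finset.mem_filter.1 hz).2)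
              _ = K * ∑ z ∈ (children parent v).filter p, ((desc parent z).card : ℝ) := by
                  rw [Finset.mul_sum]
          have h2 : ∑ z ∈ (children parent v).filter p, ((desc parent z).card : ℝ) ≤
              ∑ z ∈ children parent v, ((desc parent z).card : ℝ) := by
            apply Finset.sum_le_sum_of_subset_of_nonneg (Finset.filter_subset _ _)
            intro z _ _
            positivity
          have h3 : (((children parent v).filter p).card : ℝ) * Nv < K * Nv := by
            have := mul_le_mul_of_nonneg_left h2 hK0.le
            nlinarith
          have hNv0 : (0:ℝ) < Nv := by linarith
          exact (lt_of_mul_lt_mul_right h3 hNv0.le).le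
        -- good part
        have hgood : ∑ z ∈ (children parent v).filter (fun z => ¬ p z), c z ≤ A1 := by
          have hterm : ∀ z ∈ (children parent v).filter (fun z => ¬ p z),
              c z ≤ (Hv - (2 * K + Real.log ((desc parent z).card : ℝ) / Real.log K)) *
                ∑ u ∈ desc parent z, w u := by
            intro z hz'
            obtain ⟨hzch, hznp⟩ := Finset.mem_filter.1 hz'
            have hKNz : K * ((desc parent z).card : ℝ) ≤ Nv := le_of_not_gt hznp
            have hNzpos : (0:ℝ) < ((desc parent z).card : ℝ) := by
              have := hNz1 z hzch; linarith
            have hlogs : Real.log K + Real.log ((desc parent z).card : ℝ) ≤ Real.log Nv := by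
              rw [← Real.log_mul (ne_of_gt hK0) (ne_of_gt hNzpos)]
              apply Real.log_le_log (by positivity) hKNz
            have hdelta : (1:ℝ) ≤ Hv - (2 * K + Real.log ((desc parent z).card : ℝ) / Real.log K) := by
              rw [hHv]
              have : Real.log Nv / Real.log K - Real.log ((desc parent z).card : ℝ) / Real.log K
                  = (Real.log Nv - Real.log ((desc parent z).card : ℝ)) / Real.log K := by ring
              have h5 : Real.log K ≤ Real.log Nv - Real.log ((desc parent z).card : ℝ) := by linarith
              have h6 : (1:ℝ) ≤ (Real.log Nv - Real.log ((desc parent z).card : ℝ)) / Real.log K :=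
                (one_le_div hlogK).2 h5
              linarith [h6, this]
            have hcz : c z ≤ ∑ u ∈ desc parent z, w u :=
              lemA harb htri (desc parent z).card z (hchne z hzch) le_rfl
            calc c z ≤ ∑ u ∈ desc parent z, w u := hcz
              _ ≤ (Hv - (2 * K + Real.log ((desc parent z).card : ℝ) / Real.log K)) *
                  ∑ u ∈ desc parent z, w u := le_mul_of_one_le_left (hWz0 z hzch) hdelta
          calc ∑ z ∈ (children parent v).filter (fun z => ¬ p z), c z
              ≤ ∑ z ∈ (children parent v).filter (fun z => ¬ p z),
                ((Hv - (2 * K + Real.log ((desc parent z).card : ℝ) / Real.log K)) *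
                  ∑ u ∈ desc parent z, w u) := Finset.sum_le_sum hterm
            _ ≤ A1 := by
                rw [hA1]
                apply Finset.sum_le_sum_of_subset_of_nonneg (Finset.filter_subset _ _)
                intro z hzch _
                apply mul_nonneg _ (hWz0 z hzch)
                have hd : Real.log ((desc parent z).card : ℝ) ≤ Real.log Nv := by
                  have := hNz1 z hzch
                  apply Real.log_le_log (by linarith) (hNzNv z hzch)
                rw [hHv]
                have : 0 ≤ (Real.log Nv - Real.log ((desc parent z).card : ℝ)) / Real.log K :=
                  div_nonneg (by linarith) hlogK.le
                have heq : 2 * K + Real.log Nv / Real.log K -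
                    (2 * K + Real.log ((desc parent z).card : ℝ) / Real.log K)
                    = (Real.log Nv - Real.log ((desc parent z).card : ℝ)) / Real.log K := by ring
                linarith [heq ▸ this]
        have hKM : (((children parent v).filter p).card : ℝ) * M ≤ K * M :=
          mul_le_mul_of_nonneg_right hbadcard hM0.le
        linarith
      -- final combination
      have hsc := sum_desc harb v c
      have hsw := sum_desc harb v w
      rw [hsc, hsw]
      -- goal : c v + A + K * c v ≤ Hv * (w v + WS)
      have p1 : K * c v ≤ K * (w v + S - 2 * M) := mul_le_mul_of_nonneg_left h2o hK0.le
      have p2 : (1 + K) * w v ≤ Hv * w v := mul_le_mul_of_nonneg_right hHv1K hwv.le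
      have p3 : 0 ≤ K * M := mul_nonneg hK0.le hM0.le
      nlinarith [step1, step2, hA1eq, p1, p2, p3, h2o, hM0]

section Root
variable {V : Type} [Fintype V] {r : V} {parent : V → V} {c w : V → ℝ}
attribute [local instance] Classical.propDecidable
set_option linter.unusedSectionVars false

lemma rootBound (harb : IsArborescence r parent)
    (hc : ∀ v : V, v ≠ r → 0 < c v) (hw : ∀ v : V, v ≠ r → 0 < w v)
    (htri : CombinedTriangle r parent c w)
    (h2opt : CombinedTwoOpt r parent c w)
    (K : ℝ) (hK : 1 < K) :
    ∑ v ∈ nonRoot r, c v ≤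
      (2 * K + Real.log ((nonRoot r).card : ℝ) / Real.log K) * ∑ v ∈ nonRoot r, w v := by
  have hK0 : (0:ℝ) < K := by linarith
  have hlogK : 0 < Real.log K := Real.log_pos hK
  rw [sum_nonRoot harb c, sum_nonRoot harb w, Finset.mul_sum]
  apply Finset.sum_le_sum
  intro z hz
  have hzr : z ≠ r := (mem_children'.1 hz).2
  have hczpos : 0 < c z := hc z hzr
  have hmain := mainQ harb hc hw htri h2opt K hK (desc parent z).card z hzr le_rfl
  have hWz0 : 0 ≤ ∑ u ∈ desc parent z, w u :=
    Finset.sum_nonneg fun u hu => (hw u (ne_root_of_mem_desc harb hzr hu)).le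
  have hNz1 : (1:ℝ) ≤ ((desc parent z).card : ℝ) := by
    exact_mod_cast Finset.card_pos.2 ⟨z, self_mem_desc' z⟩
  have hNzm : ((desc parent z).card : ℝ) ≤ ((nonRoot r).card : ℝ) := by
    exact_mod_cast Finset.card_le_card (desc_subset_nonRoot harb hzr)
  have hlogmono : Real.log ((desc parent z).card : ℝ) ≤ Real.log ((nonRoot r).card : ℝ) :=
    Real.log_le_log (by linarith) hNzm
  have hcoef : 2 * K + Real.log ((desc parent z).card : ℝ) / Real.log K ≤
      2 * K + Real.log ((nonRoot r).card : ℝ) / Real.log K := by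
    have h : Real.log ((desc parent z).card : ℝ) / Real.log K ≤
        Real.log ((nonRoot r).card : ℝ) / Real.log K := by gcongr
    linarith
  calc ∑ u ∈ desc parent z, c u
      ≤ (∑ u ∈ desc parent z, c u) + K * c z := by nlinarith
    _ ≤ (2 * K + Real.log ((desc parent z).card : ℝ) / Real.log K) *
        ∑ u ∈ desc parent z, w u := hmain
    _ ≤ (2 * K + Real.log ((nonRoot r).card : ℝ) / Real.log K) *
        ∑ u ∈ desc parent z, w u := mul_le_mul_of_nonneg_right hcoef hWz0

end Root


section FinalProof
attribute [local instance] Classical.propDecidable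
set_option linter.unusedSectionVars false

theorem arborescence_main_lemma {V : Type} [Fintype V]
    (r : V) (parent : V → V) (c w : V → ℝ)
    (harb : IsArborescence r parent)
    (hc : ∀ v : V, v ≠ r → 0 < c v) (hw : ∀ v : V, v ≠ r → 0 < w v)
    (htri : CombinedTriangle r parent c w)
    (h2opt : CombinedTwoOpt r parent c w)
    (hbig : 18 * ∑ v ∈ nonRoot r, w v ≤ ∑ v ∈ nonRoot r, c v) :
    ∑ v ∈ nonRoot r, c v ≤
      12 * (Real.log ((nonRoot r).card : ℝ) / Real.log (Real.log ((nonRoot r).card : ℝ))) *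
        ∑ v ∈ nonRoot r, w v := by
  rcases Nat.eq_zero_or_pos (nonRoot r).card with h0 | hpos
  · rw [Finset.card_eq_zero.1 h0]
    simp
  · have hne : (nonRoot r).Nonempty := Finset.card_pos.1 hpos
    have hwA : 0 < ∑ v ∈ nonRoot r, w v :=
      Finset.sum_pos (fun v hv => hw v (mem_nonRoot'.1 hv)) hne
    rcases le_or_gt (nonRoot r).card 17 with hle | hge
    · -- small case: contradiction with hbig
      exfalso
      have hb := rootBound harb hc hw htri h2opt 2 (by norm_num)
      have hlogm : Real.log ((nonRoot r).card : ℝ) ≤ Real.log 17 := by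
        apply Real.log_le_log (by exact_mod_cast hpos)
        exact_mod_cast hle
      have hlog17 : Real.log 17 < 14 * Real.log 2 := by
        have h1 : Real.log 17 < Real.log 16384 := Real.log_lt_log (by norm_num) (by norm_num)
        have h2 : Real.log 16384 = 14 * Real.log 2 := by
          rw [show (16384 : ℝ) = 2 ^ 14 by norm_num, Real.log_pow]
          norm_num
        linarith
      have hlog2 : 0 < Real.log 2 := Real.log_pos (by norm_num)
      have hcoef : 2 * 2 + Real.log ((nonRoot r).card : ℝ) / Real.log 2 < 18 := by
        have : Real.log ((nonRoot r).card : ℝ) / Real.log 2 < 14 := by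
          rw [div_lt_iff₀ hlog2]
          linarith
        linarith
      nlinarith
    · -- main case : card ≥ 18
      set m : ℝ := ((nonRoot r).card : ℝ) with hm
      have hm18 : (18 : ℝ) ≤ m := by rw [hm]; exact_mod_cast hge
      set L : ℝ := Real.log m with hL
      have h1L : 1 < L := by
        rw [hL]
        have : (1:ℝ) < Real.log 18 := by
          rw [show (1:ℝ) = Real.log (Real.exp 1) by rw [Real.log_exp]]
          apply Real.log_lt_log (Real.exp_pos 1)
          have := Real.exp_one_lt_d9
          linarith
        have h2 : Real.log 18 ≤ Real.log m := Real.log_le_log (by norm_num) hm18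
        linarith
      have hL0 : (0:ℝ) < L := by linarith
      have hlogL : 0 < Real.log L := Real.log_pos h1L
      set K : ℝ := Real.sqrt L with hKdef
      have hK0 : 0 ≤ K := Real.sqrt_nonneg L
      have hsq : K ^ 2 = L := Real.sq_sqrt hL0.le
      have hK1 : 1 < K := by nlinarith
      have hlogK : Real.log K = Real.log L / 2 := by
        rw [hKdef, Real.log_sqrt hL0.le]
      have hb := rootBound harb hc hw htri h2opt K hK1
      rw [hlogK] at hb
      -- coefficient comparison
      have hlogKle : Real.log K ≤ K - 1 := Real.log_le_sub_one_of_pos (by linarith)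
      have hlogL2 : Real.log L ≤ 2 * K - 2 := by
        rw [hlogK] at hlogKle; linarith
      have hKlogL : K * Real.log L ≤ 5 * L := by nlinarith
      have hcoef : 2 * K + L / (Real.log L / 2) ≤ 12 * (L / Real.log L) := by
        have he : L / (Real.log L / 2) = 2 * (L / Real.log L) := by
          field_simp
        have h2 : 2 * K ≤ 10 * (L / Real.log L) := by
          rw [show (10:ℝ) * (L / Real.log L) = (10 * L) / Real.log L by ring,
            le_div_iff₀ hlogL]
          nlinarith
        linarith [he ▸ le_refl (L / (Real.log L / 2))]
      calc ∑ v ∈ nonRoot r, c v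
          ≤ (2 * K + L / (Real.log L / 2)) * ∑ v ∈ nonRoot r, w v := hb
        _ ≤ 12 * (L / Real.log L) * ∑ v ∈ nonRoot r, w v :=
            mul_le_mul_of_nonneg_right hcoef hwA.le


end FinalProof
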